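/- Let p be an odd prime, n > m ≥ 0, d = p − 1, and a ∈ 𝔽_p^×. Consider the Laurent polynomial f̃_a(x_2,…,x_n,y_1,…,y_m) = ∑_{i=2}^n x_i^{p−1} − ∑_{j=1}^m y_j^{p−1} + a ∏_j y_j^{p−1}/∏_i x_i^{p−1} over 𝔽_p. Then for every codimension-1 face δ of Δ(f̃_a) not containing the origin, with vertices V_1,…,V_{n+m−1} (column vectors in ℤ^{n+m−1}), the group S(δ) of rational solutions r = (r_1,…,r_{n+m−1}) ∈ [0,1)^{n+m−1} of (V_1,…,V_{n+m−1})·r ≡ 0 (mod 1) is isomorphic to (ℤ/(p−1)ℤ)^{n+m−1}. -/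

import Mathlib

open Sum

/-- Vertex `P_i = d·e_{u_i}` of the Newton polytope. -/
def Ppt (n m d : ℕ) (i : Fin (n - 1)) : Fin (n - 1) ⊕ Fin m → ℝ :=
  fun k => if k = Sum.inl i then (d : ℝ) else 0

/-- Vertex `Q_j = d·e_{v_j}` of the Newton polytope. -/
def Qpt (n m d : ℕ) (j : Fin m) : Fin (n - 1) ⊕ Fin m → ℝ :=
  fun k => if k = Sum.inr j then (d : ℝ) else 0

/-- Vertex `R` (u-coordinates `−d`, v-coordinates `d`). -/
def Rpt (n m d : ℕ) : Fin (n - 1) ⊕ Fin m → ℝ :=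
  Sum.elim (fun _ => -(d : ℝ)) (fun _ => (d : ℝ))

/-- The Newton polytope `Δ`: convex hull of `0`, the `P_i`, the `Q_j` and `R`. -/
def NPolytope (n m d : ℕ) : Set (Fin (n - 1) ⊕ Fin m → ℝ) :=
  convexHull ℝ
    (insert 0 (insert (Rpt n m d) (Set.range (Ppt n m d) ∪ Set.range (Qpt n m d))))

/-- The group `S(δ)` of solutions `r ∈ (ℚ/ℤ)^N` of `(V_1,…,V_N)·r ≡ 0 (mod 1)`,
for integral column vectors `V_1,…,V_N`.  (Representatives in `[0,1)^N` taken mod `1`.) -/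
def solGroup (N : ℕ) {ι : Type*} [Fintype ι] (V : Fin N → ι → ℤ) :
    AddSubgroup (Fin N → AddCircle (1 : ℚ)) where
  carrier := {r | ∀ c : ι, ∑ k, V k c • r k = 0}
  zero_mem' := by intro c; simp
  add_mem' := by
    intro r s hr hs c
    simp only [Pi.add_apply, smul_add, Finset.sum_add_distrib, hr c, hs c, add_zero]
  neg_mem' := by
    intro r hr c
    simp only [Pi.neg_apply, smul_neg, Finset.sum_neg_distrib, hr c, neg_zero]

/-- `d`-torsion subgroup of `AddCircle (1:ℚ)`. -/
def Tor (d : ℕ) : AddSubgroup (AddCircle (1 : ℚ)) where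
  carrier := {x | d • x = 0}
  zero_mem' := smul_zero d
  add_mem' := by
    intro a b ha hb
    simp only [Set.mem_setOf_eq] at *
    rw [smul_add, ha, hb, add_zero]
  neg_mem' := by
    intro a ha
    simp only [Set.mem_setOf_eq] at *
    rw [smul_neg, ha, neg_zero]

lemma mem_Tor_iff {d : ℕ} {x : AddCircle (1 : ℚ)} : x ∈ Tor d ↔ d • x = 0 := Iff.rfl

noncomputable def torEquiv (d : ℕ) (hd : 0 < d) : ZMod d ≃+ Tor d := by
  classical
  set x0 : AddCircle (1 : ℚ) := (((d : ℚ)⁻¹ : ℚ) : AddCircle (1 : ℚ)) with hx0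
  have hdQ : (d : ℚ) ≠ 0 := by exact_mod_cast hd.ne'
  have hd0 : (d : ℕ) • x0 = 0 := by
    rw [hx0, ← AddCircle.coe_nsmul]
    have : (d : ℕ) • ((d : ℚ)⁻¹ : ℚ) = (1 : ℚ) := by
      rw [nsmul_eq_mul, mul_inv_cancel₀ hdQ]
    rw [this, AddCircle.coe_period]
  have hf : (zmultiplesHom _ x0) (d : ℤ) = 0 := by
    simp only [zmultiplesHom_apply, natCast_zsmul, hd0]
  set g : ZMod d →+ AddCircle (1 : ℚ) := ZMod.lift d ⟨zmultiplesHom _ x0, hf⟩ with hg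
  have hmem : ∀ x : ZMod d, g x ∈ Tor d := by
    intro x
    rw [mem_Tor_iff, ← map_nsmul]
    have : (d : ℕ) • x = 0 := by
      rw [nsmul_eq_mul, ZMod.natCast_self, zero_mul]
    rw [this, map_zero]
  set g' : ZMod d →+ Tor d := g.codRestrict (Tor d) hmem with hg'
  have hgz : ∀ z : ℤ, g (z : ZMod d) = ((z • ((d : ℚ)⁻¹ : ℚ) : ℚ) : AddCircle (1 : ℚ)) := by
    intro z
    rw [hg, ZMod.lift_coe]
    simp only [zmultiplesHom_apply, hx0, ← AddCircle.coe_zsmul]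
  have hinj : Function.Injective g' := by
    rw [injective_iff_map_eq_zero]
    intro x hx
    obtain ⟨z, rfl⟩ := ZMod.intCast_surjective x
    have hx' : g (z : ZMod d) = 0 := by
      have := congrArg (Subtype.val) hx
      exact this
    rw [hgz, AddCircle.coe_eq_zero_iff] at hx'
    obtain ⟨w, hw⟩ := hx'
    rw [ZMod.intCast_zmod_eq_zero_iff_dvd]
    refine ⟨w, ?_⟩
    have : (z : ℚ) = (d : ℚ) * w := by
      rw [zsmul_eq_mul, zsmul_eq_mul, mul_one] at hw; field_simp at hw
      
      linarith [hw]
    exact_mod_cast this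
  have hsurj : Function.Surjective g' := by
    rintro ⟨x, hx⟩
    obtain ⟨q, rfl⟩ := QuotientAddGroup.mk_surjective x
    rw [mem_Tor_iff, ← AddCircle.coe_nsmul, AddCircle.coe_eq_zero_iff] at hx
    obtain ⟨z, hz⟩ := hx
    refine ⟨(z : ZMod d), ?_⟩
    apply Subtype.ext
    show g _ = _
    rw [hgz]
    congr 1
    have hzq : (z : ℚ) = d * q := by
      have h1 : (z : ℤ) • (1 : ℚ) = (d : ℕ) • q := hz
      rw [zsmul_eq_mul, mul_one, nsmul_eq_mul] at h1
      exact h1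
    rw [zsmul_eq_mul, hzq]
    field_simp
  exact AddEquiv.ofBijective g' ⟨hinj, hsurj⟩

lemma smul_tor_zero {x : AddCircle (1 : ℚ)} {d : ℕ} (hx : d • x = 0) (z : ℤ)
    (hz : z = (d : ℤ) ∨ z = -(d : ℤ) ∨ z = 0) : z • x = 0 := by
  rcases hz with h | h | h <;> subst h
  · rw [natCast_zsmul, hx]
  · rw [neg_smul, natCast_zsmul, hx, neg_zero]
  · rw [zero_smul]

lemma sol_eq (N d : ℕ) (hd : 0 < d) {ι : Type*} [Fintype ι] [DecidableEq ι]
    (hcard : Fintype.card ι = N)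
    (V : Fin N → ι → ℤ) (RZ : ι → ℤ)
    (hRZ : ∀ c, RZ c = (d : ℤ) ∨ RZ c = -(d : ℤ))
    (hV : ∀ k, V k = RZ ∨ ∃ c0, V k = fun c' => if c' = c0 then (d : ℤ) else 0)
    (hinj : Function.Injective V) :
    solGroup N V = AddSubgroup.pi Set.univ (fun _ : Fin N => Tor d) := by
  classical
  have hdZ : (0 : ℤ) < (d : ℤ) := by exact_mod_cast hd
  ext r
  rw [AddSubgroup.mem_pi]
  constructor
  · -- hard direction
    intro hr
    have hr' : ∀ c : ι, ∑ k, V k c • r k = 0 := hr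
    suffices h : ∀ k, (d : ℕ) • r k = 0 by
      intro k _; exact h k
    by_cases hall : ∀ k, ∃ c0, V k = fun c' => if c' = c0 then (d : ℤ) else 0
    · choose e he using hall
      have heinj : Function.Injective e := by
        intro k k' h
        apply hinj
        rw [he k, he k', h]
      intro k
      have hsum := hr' (e k)
      have hterm : ∀ k', V k' (e k) = if e k = e k' then (d : ℤ) else 0 := by
        intro k'
        rw [he k']
      rw [Finset.sum_eq_single k] at hsum
      · rw [hterm k, if_pos rfl, natCast_zsmul] at hsum
        exact hsum
      · intro k' _ hk'
        rw [hterm k', if_neg (fun h => hk' (heinj h.symm)), zero_smul]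
      · intro h; exact absurd (Finset.mem_univ k) h
    · push_neg at hall
      obtain ⟨k0, hk0⟩ := hall
      have hVk0 : V k0 = RZ := (hV k0).resolve_right (by
        rintro ⟨c0, hc0⟩; exact hk0 c0 hc0)
      have hEZ : ∀ k, k ≠ k0 → ∃ c0, V k = fun c' => if c' = c0 then (d : ℤ) else 0 := by
        intro k hk
        refine (hV k).resolve_left ?_
        intro h
        exact hk (hinj (h.trans hVk0.symm))
      haveI : Nonempty ι := Fintype.card_pos_iff.mp (by rw [hcard]; exact k0.pos)
      choose! e he using hEZ
      have heinj : ∀ k, k ≠ k0 → ∀ k', k' ≠ k0 → e k = e k' → k = k' := by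
        intro k hk k' hk' h
        apply hinj
        rw [he k hk, he k' hk', h]
      -- find a coordinate missed by all the basis vectors
      have hcardlt : ((Finset.univ.erase k0).image e).card < Fintype.card ι := by
        calc ((Finset.univ.erase k0).image e).card ≤ (Finset.univ.erase k0).card :=
              Finset.card_image_le
          _ < Finset.univ.card := Finset.card_erase_lt_of_mem (Finset.mem_univ k0)
          _ = Fintype.card ι := by rw [Finset.card_univ, Fintype.card_fin, hcard]
      have hc0 : ∃ c0 : ι, c0 ∉ (Finset.univ.erase k0).image e := by
        by_contra h
        push_neg at h
        have : (Finset.univ : Finset ι) ⊆ (Finset.univ.erase k0).image e :=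
          fun c _ => h c
        have := Finset.card_le_card this
        rw [Finset.card_univ] at this
        omega
      obtain ⟨c0, hc0⟩ := hc0
      -- first, d • r k0 = 0
      have hrk0 : (d : ℕ) • r k0 = 0 := by
        have hsum := hr' c0
        rw [← Finset.add_sum_erase _ _ (Finset.mem_univ k0)] at hsum
        have hz : ∀ k ∈ Finset.univ.erase k0, V k c0 • r k = 0 := by
          intro k hk
          have hkne := Finset.ne_of_mem_erase hk
          have hne : c0 ≠ e k := by
            intro h
            exact hc0 (Finset.mem_image.mpr ⟨k, hk, h.symm⟩)
          simp only [he k hkne]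
          rw [if_neg hne, zero_smul]
        rw [Finset.sum_eq_zero hz, add_zero, hVk0] at hsum
        rcases hRZ c0 with h | h
        · rw [h, natCast_zsmul] at hsum; exact hsum
        · rw [h, neg_smul, neg_eq_zero, natCast_zsmul] at hsum; exact hsum
      intro k
      by_cases hk : k = k0
      · rw [hk]; exact hrk0
      · have hsum := hr' (e k)
        rw [← Finset.add_sum_erase _ _ (Finset.mem_univ k0)] at hsum
        have h1 : V k0 (e k) • r k0 = 0 := by
          rw [hVk0]
          exact smul_tor_zero hrk0 _ ((hRZ (e k)).imp id Or.inl)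
        have h2 : ∑ k' ∈ Finset.univ.erase k0, V k' (e k) • r k' = (d : ℤ) • r k := by
          rw [Finset.sum_eq_single_of_mem k (Finset.mem_erase.mpr ⟨hk, Finset.mem_univ k⟩)]
          · simp [he k hk]
          · intro k' hk' hkk'
            have hk'ne := Finset.ne_of_mem_erase hk'
            have hne : e k ≠ e k' := by
              intro h
              exact hkk' (heinj k' hk'ne k hk h.symm)
            simp only [he k' hk'ne]
            rw [if_neg hne, zero_smul]
        rw [h1, h2, zero_add, natCast_zsmul] at hsum
        exact hsum
  · -- easy direction
    intro hr
    show ∀ c : ι, ∑ k, V k c • r k = 0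
    intro c
    apply Finset.sum_eq_zero
    intro k _
    have hk := hr k (Set.mem_univ k)
    rw [mem_Tor_iff] at hk
    apply smul_tor_zero hk
    rcases hV k with h | ⟨c1, h⟩
    · rw [h]
      rcases hRZ c with h1 | h1
      · exact Or.inl h1
      · exact Or.inr (Or.inl h1)
    · simp only [h]
      by_cases hc : c = c1
      · rw [if_pos hc]; exact Or.inl rfl
      · rw [if_neg hc]; exact Or.inr (Or.inr rfl)

/-- The pi-subgroup is equivalent to the pi of the subgroups. -/
def piSubEquiv (N d : ℕ) :
    (AddSubgroup.pi Set.univ (fun _ : Fin N => Tor d)) ≃+ (Fin N → Tor d) where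
  toFun r := fun k => ⟨r.1 k, r.2 k (Set.mem_univ k)⟩
  invFun t := ⟨fun k => (t k).1, fun k _ => (t k).2⟩
  left_inv r := rfl
  right_inv t := rfl
  map_add' r s := rfl


/-- for an odd prime `p`, `n > m ≥ 0`, `d = p−1` and `a ∈ 𝔽_p^×`, every
codimension-1 face `δ` of the Newton polytope of `f̃_a` not containing the origin, with
vertices `V_1,…,V_{n+m−1} ∈ ℤ^{n+m−1}`, has solution group
`S(δ) ≅ (ℤ/(p−1)ℤ)^{n+m−1}`. -/
theorem stmt18 (p : ℕ) (hp : p.Prime) (hodd : Odd p) (n m : ℕ) (hnm : m < n)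
    (a : (ZMod p)ˣ)
    (δ : Set (Fin (n - 1) ⊕ Fin m → ℝ))
    (hδface : IsExposed ℝ (NPolytope n m (p - 1)) δ)
    (hδ0 : (0 : Fin (n - 1) ⊕ Fin m → ℝ) ∉ δ)
    (hδdim : Module.finrank ℝ (affineSpan ℝ δ).direction = n + m - 2)
    (V : Fin (n + m - 1) → (Fin (n - 1) ⊕ Fin m) → ℤ)
    (hV : δ = convexHull ℝ (Set.range fun k => fun c => ((V k c : ℝ))))
    (hVvert : ∀ k, (fun c => ((V k c : ℝ))) ∈ Set.extremePoints ℝ (NPolytope n m (p - 1))) :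
    Nonempty ((solGroup (n + m - 1) V) ≃+ (Fin (n + m - 1) → ZMod (p - 1))) := by
  classical
  have hd : 0 < p - 1 := by have := hp.two_le; omega
  have hn1 : 1 ≤ n := by omega
  have hcard : Fintype.card (Fin (n - 1) ⊕ Fin m) = n + m - 1 := by
    simp only [Fintype.card_sum, Fintype.card_fin]
    omega
  set RZ : Fin (n - 1) ⊕ Fin m → ℤ :=
    Sum.elim (fun _ => -((p - 1 : ℕ) : ℤ)) (fun _ => ((p - 1 : ℕ) : ℤ)) with hRZdef
  have hRZ : ∀ c, RZ c = ((p - 1 : ℕ) : ℤ) ∨ RZ c = -((p - 1 : ℕ) : ℤ) := by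
    intro c; cases c
    · exact Or.inr rfl
    · exact Or.inl rfl
  have hVmem : ∀ k, (fun c => ((V k c : ℝ))) ∈
      insert (0 : Fin (n - 1) ⊕ Fin m → ℝ) (insert (Rpt n m (p - 1))
        (Set.range (Ppt n m (p - 1)) ∪ Set.range (Qpt n m (p - 1)))) := by
    intro k
    have h := hVvert k
    unfold NPolytope at h
    exact extremePoints_convexHull_subset h
  have hV0 : ∀ k, (fun c => ((V k c : ℝ))) ≠ 0 := by
    intro k hk
    have hmem : (fun c => ((V k c : ℝ))) ∈ δ := by
      rw [hV]; exact subset_convexHull ℝ _ ⟨k, rfl⟩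
    rw [hk] at hmem
    exact hδ0 hmem
  have hVclass : ∀ k, V k = RZ ∨
      ∃ c0, V k = fun c' => if c' = c0 then ((p - 1 : ℕ) : ℤ) else 0 := by
    intro k
    have h := hVmem k
    simp only [Set.mem_insert_iff, Set.mem_union, Set.mem_range] at h
    rcases h with h0 | hR | ⟨i, hP⟩ | ⟨j, hQ⟩
    · exact absurd h0 (hV0 k)
    · left
      funext c
      have hc := congrFun hR c
      cases c with
      | inl i =>
        have : (V k (Sum.inl i) : ℝ) = -((p - 1 : ℕ) : ℝ) := hc
        have h2 : V k (Sum.inl i) = -((p - 1 : ℕ) : ℤ) := by exact_mod_cast this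
        simpa [hRZdef] using h2
      | inr j =>
        have : (V k (Sum.inr j) : ℝ) = ((p - 1 : ℕ) : ℝ) := hc
        have h2 : V k (Sum.inr j) = ((p - 1 : ℕ) : ℤ) := by exact_mod_cast this
        simpa [hRZdef] using h2
    · right
      refine ⟨Sum.inl i, ?_⟩
      funext c
      have hc' : (V k c : ℝ) = if c = Sum.inl i then ((p - 1 : ℕ) : ℝ) else 0 :=
        (congrFun hP c).symm
      by_cases h : c = Sum.inl i
      · rw [if_pos h] at hc' ⊢; exact_mod_cast hc'
      · rw [if_neg h] at hc' ⊢; exact_mod_cast hc'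
    · right
      refine ⟨Sum.inr j, ?_⟩
      funext c
      have hc' : (V k c : ℝ) = if c = Sum.inr j then ((p - 1 : ℕ) : ℝ) else 0 :=
        (congrFun hQ c).symm
      by_cases h : c = Sum.inr j
      · rw [if_pos h] at hc' ⊢; exact_mod_cast hc'
      · rw [if_neg h] at hc' ⊢; exact_mod_cast hc'
  have hinj : Function.Injective V := by
    rcases Nat.eq_zero_or_pos (n + m - 1) with hN | hN
    · intro a b _
      exact absurd a.isLt (by omega)
    · have hsp : vectorSpan ℝ (Set.range fun k => fun c => ((V k c : ℝ)))
          = (affineSpan ℝ δ).direction := by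
        rw [hV, ← direction_affineSpan, affineSpan_convexHull]
      have hfin : Module.finrank ℝ
          (vectorSpan ℝ (Set.range fun k => fun c => ((V k c : ℝ)))) = n + m - 2 := by
        rw [hsp]; exact hδdim
      have hai : AffineIndependent ℝ (fun k => fun c => ((V k c : ℝ))) :=
        (affineIndependent_iff_finrank_vectorSpan_eq ℝ _
          (by simp only [Fintype.card_fin]; omega)).mpr hfin
      intro a b h
      exact hai.injective (by rw [h] : (fun c => ((V a c : ℝ))) = fun c => ((V b c : ℝ)))
  have heq := sol_eq (n + m - 1) (p - 1) hd hcard V RZ hRZ hVclass hinj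
  exact ⟨((AddEquiv.addSubgroupCongr heq).trans (piSubEquiv (n + m - 1) (p - 1))).trans
    (AddEquiv.piCongrRight (fun _ => (torEquiv (p - 1) hd).symm))⟩
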